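/- arXiv:2511.11135 — 3 statements merged into one kernel-verified Lean document; each statement's English description precedes it below -/
import Mathlib

section
/- Let A be a real symmetric n×n matrix, b ∈ ℝⁿ, Δ > 0, and σ ≥ 0 a scalar such that A + σI is positive semidefinite, (A + σI)x = b, and ‖x‖ = Δ. Then x is a global minimizer of q(x) = (1/2) xᵀ A x - bᵀ x over the ball {y : ‖y‖ ≤ Δ}. -/
open Matrix

theorem stmt1 {n : ℕ} (A : Matrix (Fin n) (Fin n) ℝ) (b x : Fin n → ℝ) (Δ σ : ℝ)
    (hA : A.IsSymm) (hΔ : 0 < Δ) (hσ : 0 ≤ σ)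
    (hpsd : (A + σ • (1 : Matrix (Fin n) (Fin n) ℝ)).PosSemidef)
    (hx : (A + σ • (1 : Matrix (Fin n) (Fin n) ℝ)) *ᵥ x = b)
    (hnorm : Real.sqrt (x ⬝ᵥ x) = Δ) :
    ∀ y : Fin n → ℝ, Real.sqrt (y ⬝ᵥ y) ≤ Δ →
      (1/2) * (x ⬝ᵥ (A *ᵥ x)) - b ⬝ᵥ x ≤ (1/2) * (y ⬝ᵥ (A *ᵥ y)) - b ⬝ᵥ y := by
  intro y hy
  set B := A + σ • (1 : Matrix (Fin n) (Fin n) ℝ) with hB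
  -- norms
  have hxx : x ⬝ᵥ x = Δ ^ 2 := by
    have h0 : 0 ≤ x ⬝ᵥ x := by simpa using dotProduct_self_star_nonneg x
    have := Real.sq_sqrt h0
    rw [hnorm] at this; linarith [this]
  have hyy : y ⬝ᵥ y ≤ Δ ^ 2 := by
    have h0 : 0 ≤ y ⬝ᵥ y := by simpa using dotProduct_self_star_nonneg y
    have h1 := Real.sq_sqrt h0
    nlinarith [Real.sqrt_nonneg (y ⬝ᵥ y)]
  -- psd on y - x
  have h1 : 0 ≤ (y - x) ⬝ᵥ (B *ᵥ (y - x)) := by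
    have := hpsd.dotProduct_mulVec_nonneg (y - x)
    simpa using this
  -- symmetry of B
  have hBs : B.IsSymm := by
    unfold Matrix.IsSymm
    simp [hB, Matrix.transpose_add, hA.eq, Matrix.transpose_smul]
  have hsym : x ⬝ᵥ (B *ᵥ y) = y ⬝ᵥ (B *ᵥ x) := by
    rw [dotProduct_mulVec, ← mulVec_transpose, hBs.eq, dotProduct_comm]
  -- A *ᵥ z = B *ᵥ z - σ • z
  have hAz : ∀ z : Fin n → ℝ, A *ᵥ z = B *ᵥ z - σ • z := by
    intro z
    simp [hB, add_mulVec, smul_mulVec]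
  have hbx : b ⬝ᵥ x = x ⬝ᵥ (B *ᵥ x) := by rw [← hx, dotProduct_comm]
  have hby : b ⬝ᵥ y = y ⬝ᵥ (B *ᵥ x) := by rw [← hx, dotProduct_comm]
  have hexp : (y - x) ⬝ᵥ (B *ᵥ (y - x)) =
      y ⬝ᵥ (B *ᵥ y) - 2 * (y ⬝ᵥ (B *ᵥ x)) + x ⬝ᵥ (B *ᵥ x) := by
    simp [mulVec_sub, dotProduct_sub, sub_dotProduct, hsym]
    ring
  rw [hAz x, hAz y, hbx, hby, dotProduct_sub, dotProduct_sub, dotProduct_smul,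
    dotProduct_smul]
  rw [hexp] at h1
  have : σ * (y ⬝ᵥ y) ≤ σ * (Δ^2) := mul_le_mul_of_nonneg_left hyy hσ
  simp only [smul_eq_mul]
  nlinarith [this, h1, hxx]
end

section
/- Let A be a real symmetric n×n matrix, b ∈ ℝⁿ, ρ > 0, r ≥ 2, and σ a scalar with σ = ρ‖x‖^{r-2}, (A + σI)x = b, and A + σI positive semidefinite. Then x is a global minimizer of f(y) = (1/2) yᵀ A y - bᵀ y + (ρ/r)‖y‖^r over ℝⁿ. -/
open Matrix

lemma amgm_key (ρ r s t : ℝ) (hρ : 0 < ρ) (hr : 2 ≤ r) (hs : 0 ≤ s) (ht : 0 ≤ t) :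
    ρ/2 * (s ^ (r-2) * (t*t)) ≤ ρ/r * t ^ r + (ρ/2 - ρ/r) * s ^ r := by
  have hr0 : (0:ℝ) < r := by linarith
  have h := Real.geom_mean_le_arith_mean2_weighted
    (w₁ := (r-2)/r) (w₂ := 2/r) (p₁ := s ^ r) (p₂ := t ^ r)
    (div_nonneg (by linarith) hr0.le) (by positivity)
    (Real.rpow_nonneg hs r) (Real.rpow_nonneg ht r) (by field_simp; ring)
  have e1 : (s ^ r) ^ ((r-2)/r) = s ^ (r-2) := by
    rw [← Real.rpow_mul hs]; congr 1; field_simp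
  have e2 : (t ^ r) ^ ((2:ℝ)/r) = t * t := by
    rw [← Real.rpow_mul ht]
    rw [show r * (2/r) = (2:ℝ) by field_simp]
    rw [show (2:ℝ) = ((2:ℕ):ℝ) by norm_num, Real.rpow_natCast]; ring
  rw [e1, e2] at h
  have h2 := mul_le_mul_of_nonneg_left h (by linarith : (0:ℝ) ≤ ρ/2)
  calc ρ/2 * (s ^ (r-2) * (t*t)) = ρ/2 * (s ^ (r-2) * (t*t)) := rfl
    _ ≤ ρ/2 * ((r-2)/r * s ^ r + 2/r * t ^ r) := h2
    _ = ρ/r * t ^ r + (ρ/2 - ρ/r) * s ^ r := by field_simp; ring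

theorem stmt2 {n : ℕ} (A : Matrix (Fin n) (Fin n) ℝ) (b x : Fin n → ℝ) (ρ r σ : ℝ)
    (hA : A.IsSymm) (hρ : 0 < ρ) (hr : 2 ≤ r)
    (hσ : σ = ρ * Real.sqrt (x ⬝ᵥ x) ^ (r - 2))
    (hx : (A + σ • (1 : Matrix (Fin n) (Fin n) ℝ)) *ᵥ x = b)
    (hpsd : (A + σ • (1 : Matrix (Fin n) (Fin n) ℝ)).PosSemidef) :
    ∀ y : Fin n → ℝ,
      (1/2) * (x ⬝ᵥ (A *ᵥ x)) - b ⬝ᵥ x + (ρ/r) * Real.sqrt (x ⬝ᵥ x) ^ r ≤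
      (1/2) * (y ⬝ᵥ (A *ᵥ y)) - b ⬝ᵥ y + (ρ/r) * Real.sqrt (y ⬝ᵥ y) ^ r := by
  intro y
  set M := A + σ • (1 : Matrix (Fin n) (Fin n) ℝ) with hMdef
  set s := Real.sqrt (x ⬝ᵥ x) with hsdef
  set t := Real.sqrt (y ⬝ᵥ y) with htdef
  have hs0 : 0 ≤ s := Real.sqrt_nonneg _
  have ht0 : 0 ≤ t := Real.sqrt_nonneg _
  have hss : s * s = x ⬝ᵥ x := Real.mul_self_sqrt (Finset.sum_nonneg fun i _ => mul_self_nonneg _)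
  have htt : t * t = y ⬝ᵥ y := Real.mul_self_sqrt (Finset.sum_nonneg fun i _ => mul_self_nonneg _)
  -- symmetry of M
  have hMsymm : Mᵀ = M := by
    have := hpsd.1
    simpa [Matrix.IsHermitian] using this
  have h1 : 0 ≤ (y - x) ⬝ᵥ (M *ᵥ (y - x)) := by
    have := hpsd.dotProduct_mulVec_nonneg (y - x)
    simpa using this
  -- x ⬝ᵥ (M *ᵥ y) = b ⬝ᵥ y
  have hxy : x ⬝ᵥ (M *ᵥ y) = b ⬝ᵥ y := by
    rw [Matrix.dotProduct_mulVec, ← Matrix.mulVec_transpose, hMsymm, hx]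
  have hyx : y ⬝ᵥ (M *ᵥ x) = b ⬝ᵥ y := by
    rw [hx, dotProduct_comm]
  have hxx : x ⬝ᵥ (M *ᵥ x) = b ⬝ᵥ x := by
    rw [hx, dotProduct_comm]
  have hexp : (y - x) ⬝ᵥ (M *ᵥ (y - x))
      = y ⬝ᵥ (M *ᵥ y) - 2 * (b ⬝ᵥ y) + b ⬝ᵥ x := by
    rw [Matrix.mulVec_sub, sub_dotProduct, dotProduct_sub, dotProduct_sub, hxy, hyx, hxx]
    ring
  -- relate A-quadratic forms to M-quadratic forms
  have hqy : y ⬝ᵥ (M *ᵥ y) = y ⬝ᵥ (A *ᵥ y) + σ * (y ⬝ᵥ y) := by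
    simp [hMdef, Matrix.add_mulVec, Matrix.smul_mulVec, Matrix.one_mulVec,
      dotProduct_add, dotProduct_smul, smul_eq_mul]
  have hqx : x ⬝ᵥ (M *ᵥ x) = x ⬝ᵥ (A *ᵥ x) + σ * (x ⬝ᵥ x) := by
    simp [hMdef, Matrix.add_mulVec, Matrix.smul_mulVec, Matrix.one_mulVec,
      dotProduct_add, dotProduct_smul, smul_eq_mul]
  -- power identity: s^(r-2) * (s*s) = s^r
  have hsr : s ^ (r-2) * (s*s) = s ^ r := by
    rcases eq_or_lt_of_le hs0 with h|h
    · rw [← h]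
      rw [Real.zero_rpow (by linarith : r ≠ 0)]
      ring
    · rw [show s * s = s ^ (2:ℝ) by
        rw [show (2:ℝ) = ((2:ℕ):ℝ) by norm_num, Real.rpow_natCast]; ring]
      rw [← Real.rpow_add h]
      norm_num
  have key := amgm_key ρ r s t hρ hr hs0 ht0
  -- assemble
  have hq1 : y ⬝ᵥ (A *ᵥ y) = y ⬝ᵥ (M *ᵥ y) - σ * (t*t) := by rw [hqy, htt]; ring
  have hq2 : x ⬝ᵥ (A *ᵥ x) = b ⬝ᵥ x - σ * (s*s) := by
    have := hqx; rw [hxx] at this; rw [hss]; linarith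
  rw [hq1, hq2]
  subst hσ
  nlinarith [h1, hexp, key, hsr]
end

section
/- Let S = PᵀP with P ∈ ℝ^{n×n} invertible, let A be symmetric invertible, and b ∈ ℝⁿ. With A_P = P^{-T}AP^{-1} and b_P = P^{-T}b, the extended Krylov subspace span{b_P, A_P⁻¹b_P, A_P b_P, ..., A_P^{-m}b_P, A_P^m b_P} equals P^{-T} · span{b, (SA⁻¹)b, (AS⁻¹)b, ..., (SA⁻¹)^m b, (AS⁻¹)^m b}. -/
open Matrix

theorem stmt16 {n : ℕ} (P A : Matrix (Fin n) (Fin n) ℝ) (b : Fin n → ℝ) (m : ℕ)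
    (hP : IsUnit P) (hA : A.IsSymm) (hAinv : IsUnit A) :
    Submodule.span ℝ
      {v : Fin n → ℝ | ∃ j : ℤ, -(m : ℤ) ≤ j ∧ j ≤ (m : ℤ) ∧
        v = (((P⁻¹)ᵀ * A * P⁻¹) ^ j) *ᵥ ((P⁻¹)ᵀ *ᵥ b)} =
    Submodule.map (Matrix.mulVecLin ((P⁻¹)ᵀ))
      (Submodule.span ℝ
        {v : Fin n → ℝ | ∃ k : ℕ, k ≤ m ∧
          (v = (((Pᵀ * P) * A⁻¹) ^ k) *ᵥ b ∨ v = ((A * (Pᵀ * P)⁻¹) ^ k) *ᵥ b)}) := by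
  have hPd : IsUnit P.det := (Matrix.isUnit_iff_isUnit_det P).mp hP
  have hPtd : IsUnit Pᵀ.det := by rwa [Matrix.det_transpose]
  have hT : (P⁻¹)ᵀ = (Pᵀ)⁻¹ := Matrix.transpose_nonsing_inv P
  -- cancellation lemmas
  have c1 : ∀ X : Matrix (Fin n) (Fin n) ℝ, Pᵀ * ((P⁻¹)ᵀ * X) = X := by
    intro X; rw [hT, ← Matrix.mul_assoc, Matrix.mul_nonsing_inv _ hPtd, Matrix.one_mul]
  have c2 : ∀ X : Matrix (Fin n) (Fin n) ℝ, (P⁻¹)ᵀ * (Pᵀ * X) = X := by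
    intro X; rw [hT, ← Matrix.mul_assoc, Matrix.nonsing_inv_mul _ hPtd, Matrix.one_mul]
  have c3 : ∀ X : Matrix (Fin n) (Fin n) ℝ, P⁻¹ * ((P⁻¹)ᵀ * X) = (Pᵀ * P)⁻¹ * X := by
    intro X; rw [hT, ← Matrix.mul_assoc, ← Matrix.mul_inv_rev]
  set M : Matrix (Fin n) (Fin n) ℝ := (P⁻¹)ᵀ * A * P⁻¹ with hM
  have key1 : ∀ k : ℕ, M ^ k * (P⁻¹)ᵀ = (P⁻¹)ᵀ * (A * (Pᵀ * P)⁻¹) ^ k := by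
    intro k
    induction k with
    | zero => simp
    | succ k ih =>
      rw [pow_succ', pow_succ', Matrix.mul_assoc, ih, hM]
      simp only [Matrix.mul_assoc, c2, c3]
  have hMinv : M⁻¹ = P * A⁻¹ * Pᵀ := by
    rw [hM, Matrix.mul_inv_rev, Matrix.mul_inv_rev, Matrix.nonsing_inv_nonsing_inv _ hPd, hT,
      Matrix.nonsing_inv_nonsing_inv _ hPtd, Matrix.mul_assoc]
  have c4 : ∀ X : Matrix (Fin n) (Fin n) ℝ, (P⁻¹)ᵀ * (Pᵀ * P * A⁻¹ * X) = P * (A⁻¹ * X) := by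
    intro X; simp only [Matrix.mul_assoc, c2]
  have key2 : ∀ k : ℕ, (M⁻¹) ^ k * (P⁻¹)ᵀ = (P⁻¹)ᵀ * ((Pᵀ * P) * A⁻¹) ^ k := by
    intro k
    induction k with
    | zero => simp
    | succ k ih =>
      rw [pow_succ', pow_succ', Matrix.mul_assoc, ih, hMinv]
      simp only [Matrix.mul_assoc, c4, c1, c2]
  -- zpow reductions
  have zneg : ∀ k : ℕ, M ^ (-(k : ℤ)) = (M⁻¹) ^ k := by
    intro k; rw [Matrix.zpow_neg_natCast, Matrix.inv_pow']
  have zpos : ∀ k : ℕ, M ^ (k : ℤ) = M ^ k := fun k => zpow_natCast M k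
  rw [Submodule.map_span]
  congr 1
  ext v
  constructor
  · rintro ⟨j, hj1, hj2, rfl⟩
    rcases j with k | k
    · -- j = k ≥ 0
      have hk : k ≤ m := by rw [Int.ofNat_eq_coe] at hj2; exact_mod_cast hj2
      refine ⟨((A * (Pᵀ * P)⁻¹) ^ k) *ᵥ b, ⟨k, hk, Or.inr rfl⟩, ?_⟩
      rw [Matrix.mulVecLin_apply, Matrix.mulVec_mulVec, ← key1, ← Matrix.mulVec_mulVec]
      norm_num [zpos k]
    · -- j = -(k+1)
      have hk : k + 1 ≤ m := by rw [Int.negSucc_eq] at hj1; omega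
      refine ⟨(((Pᵀ * P) * A⁻¹) ^ (k + 1)) *ᵥ b, ⟨k + 1, hk, Or.inl rfl⟩, ?_⟩
      rw [Matrix.mulVecLin_apply, Matrix.mulVec_mulVec, ← key2, ← Matrix.mulVec_mulVec]
      have : (Int.negSucc k) = -((k + 1 : ℕ) : ℤ) := by rw [Int.negSucc_eq]; push_cast; ring
      rw [this, zneg]
  · rintro ⟨v', ⟨k, hk, h | h⟩, rfl⟩
    · refine ⟨-(k : ℤ), by omega, by omega, ?_⟩
      rw [h, Matrix.mulVecLin_apply, Matrix.mulVec_mulVec, ← key2, ← Matrix.mulVec_mulVec,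
        zneg]
    · refine ⟨(k : ℤ), by omega, by omega, ?_⟩
      rw [h, Matrix.mulVecLin_apply, Matrix.mulVec_mulVec, ← key1, ← Matrix.mulVec_mulVec,
        zpos]
end
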